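/- Let h : ℝ → ℝ be nonnegative, integrable on [0,∞), and continuous at 0. Let c > 0, M > 0, and let M_η (η > 0) be real numbers with M_η → M as η → ∞. Then lim_{η→∞} η²·∫_0^∞ t·M_η·e^{−ηt}/(c + M_η·e^{−ηt})·h(t) dt = h(0)·∫_0^∞ t·M·e^{−t}/(c + M·e^{−t}) dt. -/

import Mathlib

set_option maxHeartbeats 1000000

open MeasureTheory Filter

private lemma aux_xexp (x : ℝ) : x * Real.exp (-x) ≤ 1 := by
  have h1 : x ≤ Real.exp x := by linarith [Real.add_one_le_exp x]
  calc x * Real.exp (-x) ≤ Real.exp x * Real.exp (-x) :=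
        mul_le_mul_of_nonneg_right h1 (Real.exp_pos _).le
    _ = 1 := by rw [← Real.exp_add]; simp

private lemma aux_xexp2 (s : ℝ) : s * Real.exp (-s) ≤ 2 * Real.exp (-(2⁻¹ * s)) := by
  have h1 := aux_xexp (2⁻¹ * s)
  have h2 : Real.exp (-s) = Real.exp (-(2⁻¹ * s)) * Real.exp (-(2⁻¹ * s)) := by
    rw [← Real.exp_add]; ring_nf
  have h3 := (Real.exp_pos (-(2⁻¹ * s))).le
  nlinarith [Real.exp_pos (-(2⁻¹ * s))]

theorem sigmoid_slack_limit (h : ℝ → ℝ) (hnn : ∀ t, 0 ≤ h t)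
    (hint : IntegrableOn h (Set.Ici (0 : ℝ)))
    (hcont : ContinuousAt h 0)
    (c : ℝ) (hc : 0 < c) (M : ℝ) (hM : 0 < M)
    (Mη : ℝ → ℝ) (hMη : Tendsto Mη atTop (nhds M)) :
    Tendsto (fun η : ℝ =>
        η ^ 2 * ∫ t in Set.Ioi (0 : ℝ),
          t * Mη η * Real.exp (-η * t) / (c + Mη η * Real.exp (-η * t)) * h t)
      atTop (nhds (h 0 * ∫ t in Set.Ioi (0 : ℝ),
          t * M * Real.exp (-t) / (c + M * Real.exp (-t)))) := by
  -- bound for h near 0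
  obtain ⟨δ0, hδ0, hBprop⟩ : ∃ δ0 > 0, ∀ t : ℝ, dist t 0 < δ0 → dist (h t) (h 0) < 1 :=
    Metric.continuousAt_iff.mp hcont 1 one_pos
  set δ : ℝ := δ0 / 2 with hδdef
  have hδ : 0 < δ := by positivity
  set B : ℝ := h 0 + 1 with hBdef
  have hB0 : 0 < B := by have := hnn 0; simp only [hBdef]; linarith
  have hhB : ∀ t : ℝ, |t| ≤ δ → h t ≤ B := by
    intro t ht
    have h1 : dist (h t) (h 0) < 1 := hBprop t (by rw [Real.dist_eq, sub_zero]; linarith)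
    rw [Real.dist_eq] at h1
    have := abs_lt.mp h1
    simp only [hBdef]; linarith [this.1, this.2]
  have hIoi : IntegrableOn h (Set.Ioi (0 : ℝ)) := hint.mono_set Set.Ioi_subset_Ici_self
  set I : ℝ := ∫ t in Set.Ioi (0 : ℝ), h t with hIdef
  have hI0 : 0 ≤ I := setIntegral_nonneg measurableSet_Ioi fun t _ => hnn t
  -- eventual bounds on Mη
  have hE : ∀ᶠ η in atTop, (1 : ℝ) ≤ η ∧ M / 2 ≤ Mη η ∧ Mη η ≤ 2 * M := by
    have h2 : ∀ᶠ η in atTop, Mη η ∈ Set.Icc (M / 2) (2 * M) :=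
      hMη (Icc_mem_nhds (by linarith) (by linarith))
    filter_upwards [eventually_ge_atTop (1 : ℝ), h2] with η h1 h2
    exact ⟨h1, h2.1, h2.2⟩
  -- integrability of the original integrand
  have hφint : ∀ η : ℝ, 1 ≤ η → 0 < Mη η → Mη η ≤ 2 * M →
      IntegrableOn (fun t => t * Mη η * Real.exp (-η * t) /
        (c + Mη η * Real.exp (-η * t)) * h t) (Set.Ioi (0 : ℝ)) := by
    intro η hη hm0 hm2
    have hη0 : (0 : ℝ) < η := lt_of_lt_of_le one_pos hη
    have hmeas : AEStronglyMeasurable (fun t => t * Mη η * Real.exp (-η * t) /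
        (c + Mη η * Real.exp (-η * t)) * h t) (volume.restrict (Set.Ioi (0:ℝ))) := by
      refine AEStronglyMeasurable.mul ?_ hIoi.aestronglyMeasurable
      have cexp : Continuous fun t : ℝ => Real.exp (-η * t) :=
        Real.continuous_exp.comp (continuous_const.mul continuous_id)
      refine (Continuous.div ((continuous_id.mul continuous_const).mul cexp)
        (continuous_const.add (continuous_const.mul cexp)) ?_).aestronglyMeasurable
      intro x
      have : 0 < c + Mη η * Real.exp (-η * x) :=
        add_pos hc (mul_pos hm0 (Real.exp_pos _))
      exact this.ne'
    refine Integrable.mono' (hIoi.const_mul (2 * M / c)) hmeas ?_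
    rw [ae_restrict_iff' measurableSet_Ioi]
    refine ae_of_all _ fun t ht => ?_
    have ht0 : (0 : ℝ) < t := ht
    have hden : 0 < c + Mη η * Real.exp (-η * t) :=
      add_pos hc (mul_pos hm0 (Real.exp_pos _))
    have hnum : 0 ≤ t * Mη η * Real.exp (-η * t) := by positivity
    rw [Real.norm_of_nonneg (mul_nonneg (div_nonneg hnum hden.le) (hnn t))]
    have hxe : t * Real.exp (-η * t) ≤ 1 := by
      have := aux_xexp (η * t)
      have h2 : t * Real.exp (-η * t) = η⁻¹ * (η * t * Real.exp (-(η * t))) := by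
        field_simp
      rw [h2, neg_mul] at *
      calc η⁻¹ * (η * t * Real.exp (-(η * t))) ≤ η⁻¹ * 1 := by
            apply mul_le_mul_of_nonneg_left this (by positivity)
        _ ≤ 1 := by rw [mul_one]; exact inv_le_one_of_one_le₀ hη
    calc t * Mη η * Real.exp (-η * t) / (c + Mη η * Real.exp (-η * t)) * h t
        ≤ t * Mη η * Real.exp (-η * t) / c * h t := by
          gcongr
          · exact hnn t
          · linarith [mul_pos hm0 (Real.exp_pos (-η * t))]
      _ ≤ 2 * M / c * h t := by
          have key : t * Mη η * Real.exp (-η * t) ≤ 2 * M := by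
            have h2 : t * Mη η * Real.exp (-η * t) = Mη η * (t * Real.exp (-η * t)) := by
              ring
            rw [h2]
            calc Mη η * (t * Real.exp (-η * t)) ≤ Mη η * 1 :=
                  mul_le_mul_of_nonneg_left hxe hm0.le
              _ = Mη η := mul_one _
              _ ≤ 2 * M := hm2
          gcongr
          exact hnn t
  -- change of variables s = η t on the piece (0, δ]
  have hsub : ∀ η : ℝ, 1 ≤ η →
      η ^ 2 * ∫ t in Set.Ioc (0:ℝ) δ,
          t * Mη η * Real.exp (-η * t) / (c + Mη η * Real.exp (-η * t)) * h t
        = ∫ s in Set.Ioi (0:ℝ), (Set.Ioc (0:ℝ) (η * δ)).indicator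
            (fun s => s * Mη η * Real.exp (-s) / (c + Mη η * Real.exp (-s)) * h (η⁻¹ * s)) s := by
    intro η hη
    have hη0 : (0:ℝ) < η := lt_of_lt_of_le one_pos hη
    have e1 : ∀ t : ℝ,
        t * Mη η * Real.exp (-η * t) / (c + Mη η * Real.exp (-η * t)) * h t
          = η⁻¹ * ((fun s => s * Mη η * Real.exp (-s) /
              (c + Mη η * Real.exp (-s)) * h (η⁻¹ * s)) (η * t)) := by
      intro t
      simp only
      rw [inv_mul_cancel_left₀ hη0.ne' t, neg_mul]
      rw [show η * t * Mη η * Real.exp (-(η * t)) / (c + Mη η * Real.exp (-(η * t))) * h t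
          = η * (t * Mη η * Real.exp (-(η * t)) / (c + Mη η * Real.exp (-(η * t))) * h t) by
        ring]
      rw [inv_mul_cancel_left₀ hη0.ne']
    calc η ^ 2 * ∫ t in Set.Ioc (0:ℝ) δ,
          t * Mη η * Real.exp (-η * t) / (c + Mη η * Real.exp (-η * t)) * h t
        = η ^ 2 * ∫ t in (0:ℝ)..δ, η⁻¹ * ((fun s => s * Mη η * Real.exp (-s) /
              (c + Mη η * Real.exp (-s)) * h (η⁻¹ * s)) (η * t)) := by
          rw [← intervalIntegral.integral_of_le hδ.le]
          congr 1
          exact intervalIntegral.integral_congr fun t _ => e1 t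
      _ = η ^ 2 * (η⁻¹ * ∫ t in (0:ℝ)..δ, (fun s => s * Mη η * Real.exp (-s) /
              (c + Mη η * Real.exp (-s)) * h (η⁻¹ * s)) (η * t)) := by
          rw [intervalIntegral.integral_const_mul]
      _ = η ^ 2 * (η⁻¹ * (η⁻¹ • ∫ s in (η * 0)..(η * δ), s * Mη η * Real.exp (-s) /
              (c + Mη η * Real.exp (-s)) * h (η⁻¹ * s))) := by
          rw [intervalIntegral.integral_comp_mul_left
            (fun s => s * Mη η * Real.exp (-s) / (c + Mη η * Real.exp (-s)) * h (η⁻¹ * s))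
            hη0.ne']
      _ = ∫ s in (0:ℝ)..(η * δ), s * Mη η * Real.exp (-s) /
              (c + Mη η * Real.exp (-s)) * h (η⁻¹ * s) := by
          rw [mul_zero, smul_eq_mul, ← mul_assoc, ← mul_assoc, show η ^ 2 * η⁻¹ * η⁻¹ = 1 by
            rw [pow_two, mul_inv_cancel_right₀ hη0.ne', mul_inv_cancel₀ hη0.ne'], one_mul]
      _ = ∫ s in Set.Ioc (0:ℝ) (η * δ), s * Mη η * Real.exp (-s) /
              (c + Mη η * Real.exp (-s)) * h (η⁻¹ * s) := by
          rw [intervalIntegral.integral_of_le (by positivity)]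
      _ = ∫ s in Set.Ioi (0:ℝ), (Set.Ioc (0:ℝ) (η * δ)).indicator
            (fun s => s * Mη η * Real.exp (-s) / (c + Mη η * Real.exp (-s)) * h (η⁻¹ * s)) s := by
          rw [integral_indicator measurableSet_Ioc,
            Measure.restrict_restrict measurableSet_Ioc,
            Set.inter_eq_self_of_subset_left Set.Ioc_subset_Ioi_self]
  -- main term: dominated convergence
  have hmain : Tendsto (fun η : ℝ => ∫ s in Set.Ioi (0:ℝ), (Set.Ioc (0:ℝ) (η * δ)).indicator
      (fun s => s * Mη η * Real.exp (-s) / (c + Mη η * Real.exp (-s)) * h (η⁻¹ * s)) s)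
      atTop (nhds (h 0 * ∫ t in Set.Ioi (0:ℝ),
        t * M * Real.exp (-t) / (c + M * Real.exp (-t)))) := by
    have hlimint : (∫ s in Set.Ioi (0:ℝ),
        s * M * Real.exp (-s) / (c + M * Real.exp (-s)) * h 0)
        = h 0 * ∫ t in Set.Ioi (0:ℝ), t * M * Real.exp (-t) / (c + M * Real.exp (-t)) := by
      rw [integral_mul_const, mul_comm]
    rw [← hlimint]
    refine tendsto_integral_filter_of_dominated_convergence
      (fun s => 4 * M * B / c * Real.exp (-(2⁻¹ * s))) ?_ ?_ ?_ ?_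
    · -- measurability
      filter_upwards [hE] with η hηE
      obtain ⟨hη1, hm1, hm2⟩ := hηE
      have hη0 : (0:ℝ) < η := lt_of_lt_of_le one_pos hη1
      have hm0 : 0 < Mη η := lt_of_lt_of_le (by positivity) hm1
      have hcomp : IntegrableOn (fun s => h (η⁻¹ * s)) (Set.Ioi (0:ℝ)) := by
        have := integrableOn_Ioi_comp_mul_left_iff h 0 (inv_pos.mpr hη0)
        rw [mul_zero] at this
        exact this.mpr hIoi
      have cexp : Continuous fun s : ℝ => Real.exp (-s) :=
        Real.continuous_exp.comp continuous_neg
      refine AEStronglyMeasurable.indicator ?_ measurableSet_Ioc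
      refine AEStronglyMeasurable.mul ?_ hcomp.aestronglyMeasurable
      refine (Continuous.div ((continuous_id.mul continuous_const).mul cexp)
        (continuous_const.add (continuous_const.mul cexp)) fun x => ?_).aestronglyMeasurable
      exact (add_pos hc (mul_pos hm0 (Real.exp_pos _))).ne'
    · -- uniform bound
      filter_upwards [hE] with η hηE
      obtain ⟨hη1, hm1, hm2⟩ := hηE
      have hη0 : (0:ℝ) < η := lt_of_lt_of_le one_pos hη1
      have hm0 : 0 < Mη η := lt_of_lt_of_le (by positivity) hm1
      refine ae_of_all _ fun s => ?_
      by_cases hs : s ∈ Set.Ioc (0:ℝ) (η * δ)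
      · rw [Set.indicator_of_mem hs]
        have hs0 : 0 < s := hs.1
        have hden : 0 < c + Mη η * Real.exp (-s) :=
          add_pos hc (mul_pos hm0 (Real.exp_pos _))
        have hhle : h (η⁻¹ * s) ≤ B := by
          apply hhB
          rw [abs_of_nonneg (by positivity)]
          calc η⁻¹ * s ≤ η⁻¹ * (η * δ) := by
                apply mul_le_mul_of_nonneg_left hs.2 (by positivity)
            _ = δ := inv_mul_cancel_left₀ hη0.ne' δ
        have hg0 : 0 ≤ s * Mη η * Real.exp (-s) / (c + Mη η * Real.exp (-s)) * h (η⁻¹ * s) := by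
          have hn : 0 ≤ s * Mη η * Real.exp (-s) := by positivity
          exact mul_nonneg (div_nonneg hn hden.le) (hnn _)
        rw [Real.norm_of_nonneg hg0]
        calc s * Mη η * Real.exp (-s) / (c + Mη η * Real.exp (-s)) * h (η⁻¹ * s)
            ≤ s * (2 * M) * Real.exp (-s) / c * B := by
              gcongr
              · exact hnn _
              · linarith [mul_pos hm0 (Real.exp_pos (-s))]
          _ ≤ 4 * M * B / c * Real.exp (-(2⁻¹ * s)) := by
              have e1 : s * (2 * M) * Real.exp (-s) / c * B
                  = 2 * M * B / c * (s * Real.exp (-s)) := by ring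
              have e2 : 4 * M * B / c * Real.exp (-(2⁻¹ * s))
                  = 2 * M * B / c * (2 * Real.exp (-(2⁻¹ * s))) := by ring
              rw [e1, e2]
              exact mul_le_mul_of_nonneg_left (aux_xexp2 s) (by positivity)
      · rw [Set.indicator_of_notMem hs]
        simp only [norm_zero]
        positivity
    · -- bound integrable
      have h2 : (0:ℝ) < 2⁻¹ := by norm_num
      have := (exp_neg_integrableOn_Ioi 0 h2).const_mul (4 * M * B / c)
      simpa [neg_mul] using this
    · -- pointwise limit
      rw [ae_restrict_iff' measurableSet_Ioi]
      refine ae_of_all _ fun s hs => ?_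
      have hs0 : (0:ℝ) < s := hs
      have hden : (0:ℝ) < c + M * Real.exp (-s) := by positivity
      have htl : Tendsto (fun η : ℝ => h (η⁻¹ * s)) atTop (nhds (h 0)) := by
        have h1 : Tendsto (fun η : ℝ => η⁻¹ * s) atTop (nhds 0) := by
          simpa using tendsto_inv_atTop_zero.mul_const s
        exact (hcont.tendsto).comp h1
      have hnum : Tendsto (fun η : ℝ => s * Mη η * Real.exp (-s)) atTop
          (nhds (s * M * Real.exp (-s))) := (hMη.const_mul s).mul_const (Real.exp (-s))
      have hden' : Tendsto (fun η : ℝ => c + Mη η * Real.exp (-s)) atTop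
          (nhds (c + M * Real.exp (-s))) :=
        tendsto_const_nhds.add (hMη.mul_const _)
      have hg : Tendsto (fun η : ℝ => s * Mη η * Real.exp (-s) /
          (c + Mη η * Real.exp (-s)) * h (η⁻¹ * s)) atTop
          (nhds (s * M * Real.exp (-s) / (c + M * Real.exp (-s)) * h 0)) :=
        ((hnum.div hden' hden.ne').mul htl)
      refine Tendsto.congr' ?_ hg
      filter_upwards [eventually_ge_atTop (s / δ)] with η hη1
      rw [Set.indicator_of_mem (Set.mem_Ioc.mpr ⟨hs0, (div_le_iff₀ hδ).mp hη1⟩)]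
  -- tail term tends to 0
  have htail : Tendsto (fun η : ℝ => η ^ 2 * ∫ t in Set.Ioi δ,
      t * Mη η * Real.exp (-η * t) / (c + Mη η * Real.exp (-η * t)) * h t)
      atTop (nhds 0) := by
    have hu : Tendsto (fun η : ℝ => 4 * M * I / c * (η * Real.exp (-(2⁻¹ * δ * η))))
        atTop (nhds 0) := by
      have base := Real.tendsto_pow_mul_exp_neg_atTop_nhds_zero 1
      have comp : Tendsto (fun η : ℝ => 2⁻¹ * δ * η) atTop atTop :=
        Tendsto.const_mul_atTop (by positivity) tendsto_id
      have h1 : Tendsto (fun η : ℝ => 2⁻¹ * δ * η * Real.exp (-(2⁻¹ * δ * η)))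
          atTop (nhds 0) := by
        have := base.comp comp
        simpa [Function.comp_def, pow_one] using this
      have h2 := h1.const_mul (4 * M * I / c * (2 / δ))
      rw [mul_zero] at h2
      refine h2.congr fun η => ?_
      field_simp
    refine tendsto_of_tendsto_of_tendsto_of_le_of_le' tendsto_const_nhds hu ?_ ?_
    · -- nonneg
      filter_upwards [hE] with η hηE
      obtain ⟨hη1, hm1, hm2⟩ := hηE
      have hη0 : (0:ℝ) < η := lt_of_lt_of_le one_pos hη1
      have hm0 : 0 < Mη η := lt_of_lt_of_le (by positivity) hm1
      have : 0 ≤ ∫ t in Set.Ioi δ,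
          t * Mη η * Real.exp (-η * t) / (c + Mη η * Real.exp (-η * t)) * h t := by
        refine setIntegral_nonneg measurableSet_Ioi fun t ht => ?_
        have ht0 : (0:ℝ) < t := lt_trans hδ ht
        have hden : 0 < c + Mη η * Real.exp (-η * t) :=
          add_pos hc (mul_pos hm0 (Real.exp_pos _))
        have hn : 0 ≤ t * Mη η * Real.exp (-η * t) := by positivity
        exact mul_nonneg (div_nonneg hn hden.le) (hnn t)
      positivity
    · -- upper bound
      filter_upwards [hE] with η hηE
      obtain ⟨hη1, hm1, hm2⟩ := hηE
      have hη0 : (0:ℝ) < η := lt_of_lt_of_le one_pos hη1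
      have hm0 : 0 < Mη η := lt_of_lt_of_le (by positivity) hm1
      set K : ℝ := 2 * M / c * (2 / η * Real.exp (-(2⁻¹ * δ * η))) with hKdef
      have hK0 : 0 ≤ K := by positivity
      have hpt : ∀ t ∈ Set.Ioi δ,
          t * Mη η * Real.exp (-η * t) / (c + Mη η * Real.exp (-η * t)) * h t
            ≤ K * h t := by
        intro t ht
        have htδ : δ < t := ht
        have ht0 : (0:ℝ) < t := lt_trans hδ htδ
        have hden : 0 < c + Mη η * Real.exp (-η * t) :=
          add_pos hc (mul_pos hm0 (Real.exp_pos _))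
        have hA : t * Real.exp (-η * t) ≤ 2 / η * Real.exp (-(2⁻¹ * δ * η)) := by
          have k1 := aux_xexp (2⁻¹ * η * t)
          have k2 : Real.exp (-η * t)
              = Real.exp (-(2⁻¹ * η * t)) * Real.exp (-(2⁻¹ * η * t)) := by
            rw [← Real.exp_add]; ring_nf
          have k3 : Real.exp (-(2⁻¹ * η * t)) ≤ Real.exp (-(2⁻¹ * δ * η)) := by
            apply Real.exp_le_exp.mpr
            nlinarith
          have e1pos := (Real.exp_pos (-(2⁻¹ * η * t))).le
          have hte1 : t * Real.exp (-(2⁻¹ * η * t)) ≤ 2 / η := by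
            have hid : t * Real.exp (-(2⁻¹ * η * t))
                = 2 / η * (2⁻¹ * η * t * Real.exp (-(2⁻¹ * η * t))) := by
              field_simp
            rw [hid]
            calc 2 / η * (2⁻¹ * η * t * Real.exp (-(2⁻¹ * η * t))) ≤ 2 / η * 1 :=
                  mul_le_mul_of_nonneg_left k1 (by positivity)
              _ = 2 / η := mul_one _
          calc t * Real.exp (-η * t)
              = t * Real.exp (-(2⁻¹ * η * t)) * Real.exp (-(2⁻¹ * η * t)) := by
                rw [k2]; ring
            _ ≤ 2 / η * Real.exp (-(2⁻¹ * η * t)) :=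
                mul_le_mul_of_nonneg_right hte1 e1pos
            _ ≤ 2 / η * Real.exp (-(2⁻¹ * δ * η)) :=
                mul_le_mul_of_nonneg_left k3 (by positivity)
        calc t * Mη η * Real.exp (-η * t) / (c + Mη η * Real.exp (-η * t)) * h t
            ≤ t * Mη η * Real.exp (-η * t) / c * h t := by
              gcongr
              · exact hnn _
              · linarith [mul_pos hm0 (Real.exp_pos (-η * t))]
          _ = Mη η / c * (t * Real.exp (-η * t)) * h t := by ring
          _ ≤ 2 * M / c * (2 / η * Real.exp (-(2⁻¹ * δ * η))) * h t := by
              apply mul_le_mul_of_nonneg_right _ (hnn t)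
              apply mul_le_mul _ hA (by positivity) (by positivity)
              gcongr
          _ = K * h t := by rw [hKdef]
      have hint1 : IntegrableOn (fun t =>
          t * Mη η * Real.exp (-η * t) / (c + Mη η * Real.exp (-η * t)) * h t)
          (Set.Ioi δ) := (hφint η hη1 hm0 hm2).mono_set (Set.Ioi_subset_Ioi hδ.le)
      have hinth : IntegrableOn h (Set.Ioi δ) := hIoi.mono_set (Set.Ioi_subset_Ioi hδ.le)
      calc η ^ 2 * ∫ t in Set.Ioi δ,
            t * Mη η * Real.exp (-η * t) / (c + Mη η * Real.exp (-η * t)) * h t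
          ≤ η ^ 2 * ∫ t in Set.Ioi δ, K * h t := by
            apply mul_le_mul_of_nonneg_left _ (by positivity)
            exact setIntegral_mono_on hint1 (hinth.const_mul K) measurableSet_Ioi hpt
        _ = η ^ 2 * (K * ∫ t in Set.Ioi δ, h t) := by rw [integral_const_mul]
        _ ≤ η ^ 2 * (K * I) := by
            apply mul_le_mul_of_nonneg_left _ (by positivity)
            apply mul_le_mul_of_nonneg_left _ hK0
            refine setIntegral_mono_set hIoi ?_ ?_
            · exact (ae_restrict_iff' measurableSet_Ioi).mpr (ae_of_all _ fun t _ => hnn t)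
            · exact HasSubset.Subset.eventuallyLE (Set.Ioi_subset_Ioi hδ.le)
        _ = 4 * M * I / c * (η * Real.exp (-(2⁻¹ * δ * η))) := by
            rw [hKdef]
            field_simp
            ring
  -- assemble
  have hfinal := hmain.add htail
  rw [add_zero] at hfinal
  refine Tendsto.congr' ?_ hfinal
  filter_upwards [hE] with η hηE
  obtain ⟨hη1, hm1, hm2⟩ := hηE
  have hη0 : (0:ℝ) < η := lt_of_lt_of_le one_pos hη1
  have hm0 : 0 < Mη η := lt_of_lt_of_le (by positivity) hm1
  rw [← hsub η hη1, ← mul_add]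
  congr 1
  rw [← setIntegral_union (Set.Ioc_disjoint_Ioi le_rfl) measurableSet_Ioi
    ((hφint η hη1 hm0 hm2).mono_set Set.Ioc_subset_Ioi_self)
    ((hφint η hη1 hm0 hm2).mono_set (Set.Ioi_subset_Ioi hδ.le)),
    Set.Ioc_union_Ioi_eq_Ioi hδ.le]
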